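/- Polynomial extrapolation lemma (one-variable version): let w : ℝ^d → ℝ be measurable with ∫|w| < ∞ and let f : ℝ^d → [0,1] be measurable such that ∫_{ℝ^d} w(x) f(x)^p dx = 0 for all positive integers p. Then ∫_{ℝ^d} w(x) f(x)^p dx = 0 for all real p > 0, provided that the function p ↦ ∫ w(x) f(x)^p dx is analytic on (0,∞) (which holds under the stated integrability assumptions when additionally ∫ |w(x)| f(x)^ε dx < ∞ for some ε > 0). -/

import Mathlib

open MeasureTheory

theorem stmt12 (d : ℕ) (w : (Fin d → ℝ) → ℝ) (f : (Fin d → ℝ) → ℝ)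
    (hw : Integrable w) (hfm : Measurable f)
    (hf0 : ∀ x, 0 ≤ f x) (hf1 : ∀ x, f x ≤ 1)
    (hint : ∀ p : ℕ, 0 < p → ∫ x, w x * f x ^ (p : ℝ) = 0)
    (hanalytic : AnalyticOn ℝ (fun p : ℝ => ∫ x, w x * f x ^ p) (Set.Ioi 0)) :
    ∀ p : ℝ, 0 < p → ∫ x, w x * f x ^ p = 0 := by
  intro p hp
  -- helper: integrability of w * bounded measurable
  have haux : ∀ g : (Fin d → ℝ) → ℝ, Measurable g → (∃ C, ∀ x, |g x| ≤ C) →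
      Integrable (fun x => w x * g x) := by
    intro g hg ⟨C, hC⟩
    have := hw.bdd_mul (f := g) (c := C) hg.aestronglyMeasurable (Filter.Eventually.of_forall fun x => by simpa using hC x)
    simpa [mul_comm] using this.mul_const 1 |>.congr (Filter.Eventually.of_forall fun x => by ring)
  -- integrability of w * f^p
  have hwp : Integrable (fun x => w x * f x ^ p) := by
    apply haux _ ((Real.continuous_rpow_const hp.le).measurable.comp hfm)
    refine ⟨1, fun x => ?_⟩
    show |f x ^ p| ≤ 1
    rw [abs_of_nonneg (Real.rpow_nonneg (hf0 x) p)]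
    exact Real.rpow_le_one (hf0 x) (hf1 x) hp.le
  -- integrability of w * f^n (nat pow)
  have hwn : ∀ n : ℕ, Integrable (fun x => w x * f x ^ n) := by
    intro n
    apply haux _ (hfm.pow_const n)
    exact ⟨1, fun x => by
      rw [abs_of_nonneg (pow_nonneg (hf0 x) n)]
      exact pow_le_one₀ (hf0 x) (hf1 x)⟩
  -- integral of w * f^n vanishes for all n with coeff structure handled below
  have hintn : ∀ n : ℕ, 0 < n → ∫ x, w x * f x ^ n = 0 := by
    intro n hn
    have := hint n hn
    rw [← this]
    congr 1; funext x
    rw [Real.rpow_natCast]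
  -- ∫ w * Q(f) = 0 for any polynomial Q with Q.eval 0 = 0
  have hpoly : ∀ Q : Polynomial ℝ, Q.eval 0 = 0 → ∫ x, w x * Q.eval (f x) = 0 := by
    intro Q hQ0
    have hrw : (fun x => w x * Q.eval (f x)) =
        fun x => ∑ n ∈ Finset.range (Q.natDegree + 1), Q.coeff n * (w x * f x ^ n) := by
      funext x
      rw [Polynomial.eval_eq_sum_range, Finset.mul_sum]
      exact Finset.sum_congr rfl fun n _ => by ring
    rw [hrw, integral_finset_sum _ (fun n _ => (hwn n).const_mul _)]
    apply Finset.sum_eq_zero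
    intro n _
    rcases Nat.eq_zero_or_pos n with h | h
    · subst h
      have : Q.coeff 0 = 0 := by simpa [Polynomial.coeff_zero_eq_eval_zero] using hQ0
      simp [this]
    · rw [integral_const_mul, hintn n h, mul_zero]
  -- main epsilon estimate
  have key : ∀ ε : ℝ, 0 < ε → |∫ x, w x * f x ^ p| ≤ ε := by
    intro ε hε
    set K := ∫ x, |w x| with hK
    have hK0 : 0 ≤ K := integral_nonneg fun x => abs_nonneg _
    set δ := ε / (2 * (K + 1)) with hδ
    have hδpos : 0 < δ := div_pos hε (by linarith)
    have hcont : ContinuousOn (fun t : ℝ => t ^ p) (Set.Icc 0 1) := fun t _ =>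
      (Real.continuousAt_rpow_const t p (Or.inr hp.le)).continuousWithinAt
    obtain ⟨P, hP⟩ := exists_polynomial_near_of_continuousOn 0 1 _ hcont δ hδpos
    set Q : Polynomial ℝ := P - Polynomial.C (P.eval 0) with hQdef
    have hQ0 : Q.eval 0 = 0 := by simp [hQdef]
    have hQnear : ∀ t ∈ Set.Icc (0:ℝ) 1, |t ^ p - Q.eval t| ≤ 2 * δ := by
      intro t ht
      have h1 := (hP t ht).le
      have h2 := (hP 0 ⟨le_refl _, zero_le_one⟩).le
      have h0 : (0:ℝ) ^ p = 0 := Real.zero_rpow hp.ne'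
      rw [h0] at h2
      have : t ^ p - Q.eval t = -((P.eval t - t ^ p) - (P.eval 0 - 0)) := by
        simp [hQdef]; ring
      rw [this, abs_neg]
      calc |(P.eval t - t ^ p) - (P.eval 0 - 0)| ≤ |P.eval t - t ^ p| + |P.eval 0 - 0| :=
            abs_sub _ _
        _ ≤ δ + δ := add_le_add h1 h2
        _ = 2 * δ := by ring
    have hwQ : Integrable (fun x => w x * Q.eval (f x)) := by
      apply haux _ ((Polynomial.continuous Q).measurable.comp hfm)
      obtain ⟨C, hC⟩ := (IsCompact.exists_bound_of_continuousOn isCompact_Icc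
        (Polynomial.continuous Q).continuousOn : ∃ C, ∀ t ∈ Set.Icc (0:ℝ) 1, ‖Q.eval t‖ ≤ C)
      exact ⟨C, fun x => by simpa using hC (f x) ⟨hf0 x, hf1 x⟩⟩
    have hzero := hpoly Q hQ0
    calc |∫ x, w x * f x ^ p|
        = |∫ x, w x * (f x ^ p - Q.eval (f x))| := by
          rw [integral_congr_ae (Filter.Eventually.of_forall fun x => by ring :
            (fun x => w x * (f x ^ p - Q.eval (f x)))
              =ᵐ[volume] fun x => w x * f x ^ p - w x * Q.eval (f x)),
            integral_sub hwp hwQ, hzero, sub_zero]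
      _ ≤ ∫ x, |w x| * |f x ^ p - Q.eval (f x)| := by
          simpa [abs_mul] using
            norm_integral_le_integral_norm (fun x => w x * (f x ^ p - Q.eval (f x)))
      _ ≤ ∫ x, |w x| * (2 * δ) := by
          apply integral_mono_of_nonneg
            (Filter.Eventually.of_forall fun x => mul_nonneg (abs_nonneg _) (abs_nonneg _))
            (hw.abs.mul_const _)
          apply Filter.Eventually.of_forall
          intro x
          exact mul_le_mul_of_nonneg_left (hQnear (f x) ⟨hf0 x, hf1 x⟩) (abs_nonneg _)
      _ = K * (2 * δ) := by rw [integral_mul_const]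
      _ ≤ (K + 1) * (2 * δ) := by nlinarith
      _ = ε := by rw [hδ]; field_simp
  have := abs_nonneg (∫ x, w x * f x ^ p)
  have h0 : |∫ x, w x * f x ^ p| ≤ 0 := by
    by_contra h
    push_neg at h
    linarith [key (|∫ x, w x * f x ^ p| / 2) (by linarith)]
  exact abs_eq_zero.mp (le_antisymm h0 this)
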